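/- Let M₁ and M₂ be simple matroids such that neither is totally disconnected. If φ : B_f(M₁) → B_f(M₂) is an isomorphism of fans, then φ is induced by a matroid isomorphism f : M₁ → M₂, i.e. φ sends the class of v_i to the class of v_{f(i)} for all i in the ground set of M₁. -/

import Mathlib

open Set Function
open scoped Matroid Classical

namespace BergmanFans

variable {α β γ : Type*}

/-! ### Matroid notions -/

/-- A circuit of a matroid: a minimal dependent set. -/
def Circuit (M : Matroid α) (C : Set α) : Prop :=
  M.Dep C ∧ ∀ D, D ⊂ C → M.Indep D

/-- The rank of a subset: the largest cardinality of an independent subset. -/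
noncomputable def rkSet (M : Matroid α) (X : Set α) : ℕ :=
  sSup {n | ∃ I, I ⊆ X ∧ M.Indep I ∧ I.ncard = n}

/-- The rank of a matroid. -/
noncomputable def rk (M : Matroid α) : ℕ := rkSet M M.E

/-- A matroid is loopfree if every singleton of the ground set is independent. -/
def Loopfree (M : Matroid α) : Prop := ∀ i ∈ M.E, M.Indep {i}

/-- A matroid is simple if it has no loops and no parallel pairs. -/
def Simple (M : Matroid α) : Prop := ∀ i ∈ M.E, ∀ j ∈ M.E, M.Indep {i, j}

/-- Two elements are related if they are equal or lie on a common circuit. -/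
def ConnRel (M : Matroid α) (i j : α) : Prop :=
  i = j ∨ ∃ C, Circuit M C ∧ i ∈ C ∧ j ∈ C

/-- The connected component of an element. -/
def component (M : Matroid α) (i : α) : Set α := {j ∈ M.E | ConnRel M i j}

/-- A matroid is connected if all pairs of elements of the ground set lie on common
circuits. -/
def Connected (M : Matroid α) : Prop :=
  M.E.Nonempty ∧ ∀ i ∈ M.E, ∀ j ∈ M.E, ConnRel M i j

/-- A matroid is totally disconnected if every connected component has rank at most one. -/
def TotallyDisconnected (M : Matroid α) : Prop :=
  ∀ i ∈ M.E, rkSet M (component M i) ≤ 1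

/-- Contraction of a set, defined by duality. -/
noncomputable def contract (M : Matroid α) (C : Set α) : Matroid α := (M✶ ↾ (M.E \ C))✶

/-- A matroid isomorphism along a bijection of the underlying types. -/
def IsMatroidIso (M₁ : Matroid α) (M₂ : Matroid β) (f : α ≃ β) : Prop :=
  f '' M₁.E = M₂.E ∧ ∀ I, I ⊆ M₁.E → (M₁.Indep I ↔ M₂.Indep (f '' I))

/-- `M` is the parallel connection of `N₁` and `N₂` along `p`, described via circuits. -/
def IsParallelConnAt (M N₁ N₂ : Matroid γ) (p : γ) : Prop :=
  N₁.E ∪ N₂.E = M.E ∧ N₁.E ∩ N₂.E = {p} ∧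
  ∀ C, Circuit M C ↔ (Circuit N₁ C ∨ Circuit N₂ C ∨
    ∃ C₁ C₂, Circuit N₁ C₁ ∧ Circuit N₂ C₂ ∧ p ∈ C₁ ∧ p ∈ C₂ ∧ C = (C₁ ∪ C₂) \ {p})

/-- `M` is a non-trivial parallel connection along `p`. -/
def IsNontrivParallelConnAt (M : Matroid γ) (p : γ) : Prop :=
  ∃ N₁ N₂, IsParallelConnAt M N₁ N₂ p ∧ 2 ≤ rk N₁ ∧ 2 ≤ rk N₂

/-- `M` is a non-trivial parallel connection. -/
def IsNontrivParallelConn (M : Matroid γ) : Prop := ∃ p, IsNontrivParallelConnAt M p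

/-- `M` is the parallel connection of matroids `M₁`, `M₂` on other ground types, glued
along `p₁ ∈ E(M₁)` and `p₂ ∈ E(M₂)` via the injections `g₁`, `g₂`. -/
def IsParallelConnEmb (M : Matroid γ) (M₁ : Matroid α) (M₂ : Matroid β)
    (g₁ : α → γ) (g₂ : β → γ) (p₁ : α) (p₂ : β) : Prop :=
  Injective g₁ ∧ Injective g₂ ∧ range g₁ ∪ range g₂ = univ ∧
    range g₁ ∩ range g₂ = {g₁ p₁} ∧ g₁ p₁ = g₂ p₂ ∧
    ∀ C, Circuit M C ↔
      ((∃ C₁, Circuit M₁ C₁ ∧ C = g₁ '' C₁) ∨ (∃ C₂, Circuit M₂ C₂ ∧ C = g₂ '' C₂) ∨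
        (∃ C₁ C₂, Circuit M₁ C₁ ∧ Circuit M₂ C₂ ∧ p₁ ∈ C₁ ∧ p₂ ∈ C₂ ∧
          C = (g₁ '' C₁ ∪ g₂ '' C₂) \ {g₁ p₁}))

/-! ### The ambient space `ℝ^E/ℝ𝟙` and its lattice -/

variable (α) [Fintype α]

/-- The line `ℝ𝟙 ⊆ ℝ^E`. -/
noncomputable def lineSub : Submodule ℝ (α → ℝ) := Submodule.span ℝ {fun _ => (1 : ℝ)}

/-- The ambient space `ℝ^E/ℝ𝟙`. -/
abbrev Amb := (α → ℝ) ⧸ lineSub α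

/-- The quotient map `ℝ^E → ℝ^E/ℝ𝟙`. -/
noncomputable def proj : (α → ℝ) →ₗ[ℝ] Amb α := (lineSub α).mkQ

/-- The lattice `ℤ^E/ℤ𝟙` inside `ℝ^E/ℝ𝟙`. -/
noncomputable def intLatt : Set (Amb α) :=
  proj α '' {x | ∀ i, ∃ n : ℤ, x i = (n : ℝ)}

variable {α}

/-- The indicator vector `v_S ∈ ℝ^E` of a subset `S ⊆ E`. -/
noncomputable def indic (S : Set α) : α → ℝ := S.indicator 1

/-! ### Fans and their isomorphisms -/

variable {V W : Type*} [AddCommGroup V] [Module ℝ V] [AddCommGroup W] [Module ℝ W]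

/-- A linear map induced by an isomorphism of the lattices `LV`, `LW`. -/
def IsLatticeLinearIso (LV : Set V) (LW : Set W) (φ : V →ₗ[ℝ] W) : Prop :=
  Function.Bijective φ ∧ φ '' LV = LW

/-- `φ` is an isomorphism of the fans `S₁`, `S₂` (viewed as their collections of cones)
with respect to the lattices `LV`, `LW`: it is induced by a lattice isomorphism, maps cones
to cones, and its inverse maps cones to cones. -/
def IsFanIso (LV : Set V) (LW : Set W) (φ : V →ₗ[ℝ] W)
    (S₁ : Set (Set V)) (S₂ : Set (Set W)) : Prop :=
  IsLatticeLinearIso LV LW φ ∧ (∀ σ ∈ S₁, φ '' σ ∈ S₂) ∧ ∀ τ ∈ S₂, φ ⁻¹' τ ∈ S₁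

/-- The ray spanned by a vector. -/
def rayOf (u : V) : Set V := {x | ∃ t : ℝ, 0 ≤ t ∧ x = t • u}

/-- The product of two fans. -/
def prodFan (S₁ : Set (Set V)) (S₂ : Set (Set W)) : Set (Set (V × W)) :=
  {σ | ∃ σ₁ ∈ S₁, ∃ σ₂ ∈ S₂, σ = σ₁ ×ˢ σ₂}

/-! ### Bergman fans -/

/-- The affine Bergman fan: the set of `x` such that for every circuit `C` the minimum of
the values of `x` on `C` is attained at least twice. -/
def affBergman (M : Matroid α) : Set (α → ℝ) :=
  {x | ∀ C, Circuit M C → ∃ i ∈ C, ∃ j ∈ C, i ≠ j ∧ x i = x j ∧ ∀ k ∈ C, x i ≤ x k}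

/-- The projective Bergman fan `B(M) ⊆ ℝ^E/ℝ𝟙`, as a set. -/
noncomputable def projBergman (M : Matroid α) : Set (Amb α) := proj α '' affBergman M

/-- A proper nonempty flat. -/
def ProperFlat (M : Matroid α) (F : Set α) : Prop := M.IsFlat F ∧ F.Nonempty ∧ F ≠ M.E

/-- The cone spanned by the classes of the indicator vectors of a finite collection of
subsets of the ground set. -/
noncomputable def flagCone (𝒞 : Finset (Set α)) : Set (Amb α) :=
  {x | ∃ c : Set α → ℝ, (∀ F, 0 ≤ c F) ∧ x = ∑ F ∈ 𝒞, c F • proj α (indic F)}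

/-- The fine fan structure on the Bergman fan: cones are spanned by flags of proper
nonempty flats. -/
noncomputable def fineFan (M : Matroid α) : Set (Set (Amb α)) :=
  {σ | ∃ 𝒞 : Finset (Set α), IsChain (· ⊆ ·) (𝒞 : Set (Set α)) ∧
    (∀ F ∈ 𝒞, ProperFlat M F) ∧ σ = flagCone 𝒞}

/-- The `w`-weight of a subset. -/
noncomputable def wt (w : α → ℝ) (B : Set α) : ℝ := ∑ i, B.indicator w i

/-- The set of bases of `M` of minimal `w`-weight: the face of the matroid polytope
selected by `w`. -/
noncomputable def minBases (M : Matroid α) (w : α → ℝ) : Set (Set α) :=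
  {B | M.IsBase B ∧ ∀ B', M.IsBase B' → wt w B ≤ wt w B'}

/-- The closed normal cone of the face of the matroid polytope selected by `w₀`. -/
noncomputable def normalCone (M : Matroid α) (w₀ : α → ℝ) : Set (α → ℝ) :=
  {w | minBases M w₀ ⊆ minBases M w}

/-- The coarse fan structure on the Bergman fan: the cones of the normal fan of the
matroid polytope whose support lies in the Bergman fan. -/
noncomputable def coarseFan (M : Matroid α) : Set (Set (Amb α)) :=
  {σ | ∃ w₀ : α → ℝ, normalCone M w₀ ⊆ affBergman M ∧ σ = proj α '' normalCone M w₀}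

/-! ### Cremona maps -/

/-- The image of the basis vector `v_k` under the Cremona map of the basis `b`. -/
noncomputable def cremTarget (M : Matroid α) (b : Set α) (k : α) : α → ℝ :=
  if k ∈ b then indic (M.closure (b \ {k})) else indic {k}

/-- The affine Cremona map associated to a basis `b` of `M`: it sends `v_k ↦ v_{cl(b\k)}`
for `k ∈ b` and fixes `v_k` for `k ∉ b`. -/
noncomputable def cremAff (M : Matroid α) (b : Set α) : (α → ℝ) →ₗ[ℝ] (α → ℝ) where
  toFun x := ∑ k, x k • cremTarget M b k
  map_add' x y := by
    simp [add_smul, Finset.sum_add_distrib]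
  map_smul' c x := by
    simp [smul_smul, Finset.smul_sum]

end BergmanFans


namespace BergmanFans


/-! ### Auxiliary lemmas -/

set_option linter.unusedSectionVars false

section Aux

variable {α : Type*} [Fintype α]

lemma indic_apply (S : Set α) (k : α) : indic S k = if k ∈ S then 1 else 0 := by
  simp [indic, Set.indicator_apply]

lemma one_mem_lineSub : (fun _ : α => (1:ℝ)) ∈ lineSub α :=
  Submodule.mem_span_singleton_self _

lemma proj_eq_iff {x y : α → ℝ} :
    proj α x = proj α y ↔ ∃ s : ℝ, ∀ k, x k - y k = s := by
  constructor
  · intro h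
    have : x - y ∈ lineSub α := (Submodule.Quotient.eq _).mp h
    obtain ⟨s, hs⟩ := Submodule.mem_span_singleton.mp this
    exact ⟨s, fun k => by
      have := congrFun hs k
      simp only [Pi.smul_apply, smul_eq_mul, mul_one] at this
      simpa [Pi.sub_apply] using this.symm⟩
  · rintro ⟨s, hs⟩
    refine (Submodule.Quotient.eq _).mpr ?_
    refine Submodule.mem_span_singleton.mpr ⟨s, ?_⟩
    funext k
    simpa [Pi.sub_apply] using (hs k).symm

lemma proj_eq_zero_iff {x : α → ℝ} :
    proj α x = 0 ↔ ∃ s : ℝ, ∀ k, x k = s := by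
  have h0 : proj α (0 : α → ℝ) = 0 := map_zero _
  rw [← h0, proj_eq_iff]
  simp

lemma proj_one_eq_zero : proj α (fun _ => (1:ℝ)) = 0 :=
  proj_eq_zero_iff.mpr ⟨1, fun _ => rfl⟩

lemma indic_eq_sum (S : Set α) :
    indic S = ∑ i ∈ S.toFinset, indic ({i} : Set α) := by
  funext k
  rw [Finset.sum_apply]
  simp only [indic_apply, Set.mem_singleton_iff]
  rw [Finset.sum_ite_eq S.toFinset k (fun _ => (1:ℝ))]
  simp

lemma proj_indic_eq_sum (S : Set α) :
    proj α (indic S) = ∑ i ∈ S.toFinset, proj α (indic ({i} : Set α)) := by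
  rw [indic_eq_sum S, map_sum]

lemma sum_indic_singleton :
    ∑ i : α, indic ({i} : Set α) = (fun _ => (1:ℝ)) := by
  funext k
  rw [Finset.sum_apply]
  simp only [indic_apply, Set.mem_singleton_iff]
  rw [Finset.sum_ite_eq Finset.univ k (fun _ => (1:ℝ))]
  simp

lemma proj_indic_ne_zero {S : Set α} (hne : S.Nonempty) (hproper : S ≠ Set.univ) :
    proj α (indic S) ≠ 0 := by
  intro h
  obtain ⟨s, hs⟩ := proj_eq_zero_iff.mp h
  obtain ⟨j, hj⟩ := hne
  obtain ⟨k, hk⟩ : ∃ k, k ∉ S := by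
    by_contra hc
    push_neg at hc
    exact hproper (Set.eq_univ_of_forall hc)
  have h1 := hs j
  have h2 := hs k
  rw [indic_apply] at h1 h2
  simp [hj, hk] at h1 h2
  exact one_ne_zero (h1.trans h2.symm)

lemma indic_proj_inj {S T : Set α} (hSne : S.Nonempty) (hSproper : S ≠ Set.univ)
    (hTne : T.Nonempty) (hTproper : T ≠ Set.univ)
    (h : proj α (indic S) = proj α (indic T)) : S = T := by
  obtain ⟨s, hs⟩ := proj_eq_iff.mp h
  have hval : ∀ k, indic S k = indic T k + s := fun k => by linarith [hs k]
  rcases eq_or_ne S T with h' | h'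
  · exact h'
  exfalso
  have : ∃ k, (k ∈ S ∧ k ∉ T) ∨ (k ∈ T ∧ k ∉ S) := by
    by_contra hc
    push_neg at hc
    apply h'
    ext k
    have := hc k
    tauto
  obtain ⟨k, hk | hk⟩ := this
  · have h1 := hval k
    rw [indic_apply, indic_apply] at h1
    simp [hk.1, hk.2] at h1
    -- then for any k', indic S k' = indic T k' + 1 forces S = univ
    apply hSproper
    apply Set.eq_univ_of_forall
    intro k'
    have h2 := hval k'
    rw [indic_apply, indic_apply] at h2
    by_contra hk'
    simp [hk'] at h2
    split_ifs at h2 <;> linarith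
  · have h1 := hval k
    rw [indic_apply, indic_apply] at h1
    simp [hk.1, hk.2] at h1
    apply hTproper
    apply Set.eq_univ_of_forall
    intro k'
    have h2 := hval k'
    rw [indic_apply, indic_apply] at h2
    by_contra hk'
    simp [hk'] at h2
    split_ifs at h2 <;> linarith

end Aux


section Cones

variable {α : Type*} [Fintype α]

lemma mem_flagCone_self {𝒞 : Finset (Set α)} {F : Set α} (hF : F ∈ 𝒞) :
    proj α (indic F) ∈ flagCone 𝒞 := by
  classical
  refine ⟨fun G => if G = F then 1 else 0, fun G => by dsimp only; split <;> norm_num, ?_⟩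
  have : ∀ G ∈ 𝒞, (if G = F then (1:ℝ) else 0) • proj α (indic G)
      = (if G = F then proj α (indic G) else 0) := by
    intro G _; split <;> simp
  rw [Finset.sum_congr rfl this, Finset.sum_ite_eq' 𝒞 F (fun G => proj α (indic G))]
  simp [hF]

lemma flagCone_singleton (F : Set α) :
    flagCone ({F} : Finset (Set α)) = {x | ∃ t : ℝ, 0 ≤ t ∧ x = t • proj α (indic F)} := by
  ext x
  constructor
  · rintro ⟨c, hc, rfl⟩
    exact ⟨c F, hc F, by rw [Finset.sum_singleton]⟩
  · rintro ⟨t, ht, rfl⟩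
    exact ⟨fun _ => t, fun _ => ht, by rw [Finset.sum_singleton]⟩

lemma flagCone_mem_fineFan {M : Matroid α} {𝒞 : Finset (Set α)}
    (hchain : IsChain (· ⊆ ·) (𝒞 : Set (Set α))) (hflats : ∀ F ∈ 𝒞, ProperFlat M F) :
    flagCone 𝒞 ∈ fineFan M := ⟨𝒞, hchain, hflats, rfl⟩

lemma chain_exists_greatest {𝒞 : Finset (Set α)} (hchain : IsChain (· ⊆ ·) (𝒞 : Set (Set α)))
    (hne : 𝒞.Nonempty) : ∃ F ∈ 𝒞, ∀ G ∈ 𝒞, G ⊆ F := by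
  obtain ⟨F, hF, hmax⟩ := 𝒞.exists_maximal hne
  refine ⟨F, hF, fun G hG => ?_⟩
  rcases eq_or_ne G F with rfl | hne'
  · exact Set.Subset.rfl
  rcases hchain hG hF hne' with h | h
  · exact h
  · exact absurd (ssubset_of_subset_of_ne h hne'.symm) (fun hss => hss.2 (hmax hG hss.1))

lemma chain_exists_least {𝒞 : Finset (Set α)} (hchain : IsChain (· ⊆ ·) (𝒞 : Set (Set α)))
    (hne : 𝒞.Nonempty) : ∃ F ∈ 𝒞, ∀ G ∈ 𝒞, F ⊆ G := by
  obtain ⟨F, hF, hmin⟩ := 𝒞.exists_minimal hne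
  refine ⟨F, hF, fun G hG => ?_⟩
  rcases eq_or_ne G F with rfl | hne'
  · exact Set.Subset.rfl
  rcases hchain hG hF hne' with h | h
  · exact absurd (ssubset_of_subset_of_ne h hne') (fun hss => hss.2 (hmin hG hss.1))
  · exact h

/-- If the class of the indicator vector of a nonempty proper subset `H` lies in the cone
spanned by a chain, then `H` belongs to the chain. -/
lemma mem_chain_of_mem_flagCone {𝒞 : Finset (Set α)}
    (hchain : IsChain (· ⊆ ·) (𝒞 : Set (Set α)))
    {H : Set α} (hHne : H.Nonempty) (hHproper : H ≠ Set.univ)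
    (hmem : proj α (indic H) ∈ flagCone 𝒞) : H ∈ 𝒞 := by
  classical
  obtain ⟨c, hc, heq⟩ := hmem
  -- pointwise form
  have heq' : proj α (indic H) = proj α (fun k => ∑ F ∈ 𝒞, c F * indic F k) := by
    rw [heq]
    have : (fun k => ∑ F ∈ 𝒞, c F * indic F k) = ∑ F ∈ 𝒞, c F • indic F := by
      funext k; rw [Finset.sum_apply]; simp [smul_eq_mul]
    rw [this, map_sum]
    simp_rw [map_smul]
  obtain ⟨s, hs⟩ := proj_eq_iff.mp heq'
  set T : Finset (Set α) := 𝒞.filter (fun F => c F ≠ 0) with hT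
  have hTsub : T ⊆ 𝒞 := Finset.filter_subset _ _
  have hcpos : ∀ F ∈ T, 0 < c F := by
    intro F hF
    have := (Finset.mem_filter.mp hF).2
    exact lt_of_le_of_ne (hc F) (Ne.symm this)
  have hchainT : IsChain (· ⊆ ·) (T : Set (Set α)) :=
    hchain.mono (by exact_mod_cast hTsub)
  -- x k as a sum over T
  set x : α → ℝ := fun k => ∑ F ∈ T, c F * indic F k with hxdef
  have hx : ∀ k, indic H k = x k + s := by
    intro k
    have h1 := hs k
    have h2 : ∑ F ∈ 𝒞, c F * indic F k = x k := by
      rw [hxdef]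
      exact (Finset.sum_filter_of_ne (fun F _ hne => by
        intro h0; rw [h0] at hne; simp at hne)).symm
    linarith
  have hxfil : ∀ k, x k = ∑ F ∈ T.filter (fun F => k ∈ F), c F := by
    intro k
    rw [hxdef, Finset.sum_filter]
    apply Finset.sum_congr rfl
    intro F _
    rw [indic_apply]
    split <;> ring
  obtain ⟨j₀, hj₀⟩ := hHne
  obtain ⟨k₀, hk₀⟩ : ∃ k, k ∉ H := by
    by_contra hcon; push_neg at hcon; exact hHproper (Set.eq_univ_of_forall hcon)
  -- step (a): every member of T is comparable with H
  have hcomp : ∀ F ∈ T, F ⊆ H ∨ H ⊆ F := by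
    intro F hFT
    by_contra hcon
    push_neg at hcon
    obtain ⟨hFH, hHF⟩ := hcon
    obtain ⟨j, hjF, hjH⟩ := Set.not_subset.mp hFH
    obtain ⟨h, hhH, hhF⟩ := Set.not_subset.mp hHF
    -- x h < x j, but x h = x j + 1
    have hmid : T.filter (fun F' => h ∈ F') ⊆ T.filter (fun F' => F ⊆ F' ∧ F ≠ F') := by
      intro F' hF'
      obtain ⟨hF'T, hhF'⟩ := Finset.mem_filter.mp hF'
      rcases eq_or_ne F' F with rfl | hne'
      · exact absurd hhF' hhF
      rcases hchainT (Finset.mem_coe.mpr hF'T) (Finset.mem_coe.mpr hFT) hne' with hle | hle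
      · -- F' ⊆ F, but h ∈ F' and h ∉ F
        exact absurd (hle hhF') hhF
      · exact Finset.mem_filter.mpr ⟨hF'T, hle, fun hFF' => hne' hFF'.symm⟩
    have hmid2 : insert F (T.filter (fun F' => F ⊆ F' ∧ F ≠ F')) ⊆
        T.filter (fun F' => j ∈ F') := by
      intro F' hF'
      rcases Finset.mem_insert.mp hF' with rfl | hF'
      · exact Finset.mem_filter.mpr ⟨hFT, hjF⟩
      · obtain ⟨hF'T, hle, _⟩ := Finset.mem_filter.mp hF'
        exact Finset.mem_filter.mpr ⟨hF'T, hle hjF⟩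
    have hFnotmid : F ∉ T.filter (fun F' => F ⊆ F' ∧ F ≠ F') := by
      intro hcon
      exact (Finset.mem_filter.mp hcon).2.2 rfl
    have hle1 : x h ≤ ∑ F' ∈ T.filter (fun F' => F ⊆ F' ∧ F ≠ F'), c F' := by
      rw [hxfil h]
      exact Finset.sum_le_sum_of_subset_of_nonneg hmid
        (fun F' hF' _ => hc F')
    have hle2 : c F + ∑ F' ∈ T.filter (fun F' => F ⊆ F' ∧ F ≠ F'), c F' ≤ x j := by
      rw [hxfil j, ← Finset.sum_insert hFnotmid]
      exact Finset.sum_le_sum_of_subset_of_nonneg hmid2 (fun F' hF' _ => hc F')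
    have hxj : indic H j = 0 := by rw [indic_apply]; simp [hjH]
    have hxh : indic H h = 1 := by rw [indic_apply]; simp [hhH]
    have e1 := hx j
    have e2 := hx h
    have hcF := hcpos F hFT
    linarith
  -- step (b): conclude H ∈ T
  have hHT : H ∈ T := by
    by_contra hHT
    set Tlo : Finset (Set α) := T.filter (fun F => F ⊆ H) with hTlo
    set Thi : Finset (Set α) := T.filter (fun F => H ⊆ F) with hThi
    have hloH : ∀ F ∈ Tlo, F ≠ H := by
      rintro F hF rfl
      exact hHT (Finset.mem_filter.mp hF).1
    have hhiH : ∀ F ∈ Thi, F ≠ H := by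
      rintro F hF rfl
      exact hHT (Finset.mem_filter.mp hF).1
    -- for j ∈ H : x j = (sum over Tlo containing j) + (sum over Thi)
    have hsplit : ∀ j ∈ H, x j = (∑ F ∈ Tlo.filter (fun F => j ∈ F), c F) + ∑ F ∈ Thi, c F := by
      intro j hj
      rw [hxfil j]
      have hun : T.filter (fun F => j ∈ F) = Tlo.filter (fun F => j ∈ F) ∪ Thi := by
        ext F
        simp only [Finset.mem_union, Finset.mem_filter, hTlo, hThi]
        constructor
        · rintro ⟨hFT, hjF⟩
          rcases hcomp F hFT with hle | hle
          · exact Or.inl ⟨⟨hFT, hle⟩, hjF⟩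
          · exact Or.inr ⟨hFT, hle⟩
        · rintro (⟨⟨hFT, _⟩, hjF⟩ | ⟨hFT, hle⟩)
          · exact ⟨hFT, hjF⟩
          · exact ⟨hFT, hle hj⟩
      have hdisj : Disjoint (Tlo.filter (fun F => j ∈ F)) Thi := by
        rw [Finset.disjoint_left]
        intro F hF1 hF2
        have hFlo : F ⊆ H := (Finset.mem_filter.mp (Finset.mem_filter.mp hF1).1).2
        have hFhi : H ⊆ F := (Finset.mem_filter.mp hF2).2
        exact hhiH F hF2 (hFhi.antisymm hFlo).symm
      rw [hun, Finset.sum_union hdisj]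
    -- for k ∉ H : x k = sum over Thi containing k
    have hsplit2 : ∀ k, k ∉ H → x k = ∑ F ∈ Thi.filter (fun F => k ∈ F), c F := by
      intro k hk
      rw [hxfil k]
      congr 1
      ext F
      simp only [Finset.mem_filter, hThi]
      constructor
      · rintro ⟨hFT, hkF⟩
        rcases hcomp F hFT with hle | hle
        · exact absurd (hle hkF) hk
        · exact ⟨⟨hFT, hle⟩, hkF⟩
      · rintro ⟨⟨hFT, _⟩, hkF⟩
        exact ⟨hFT, hkF⟩
    set D : ℝ := ∑ F ∈ Thi, c F with hD
    have hDnn : 0 ≤ D := Finset.sum_nonneg (fun F _ => hc F)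
    set u0 : ℝ := ∑ F ∈ Tlo.filter (fun F => j₀ ∈ F), c F with hu0
    have hu0nn : 0 ≤ u0 := Finset.sum_nonneg (fun F _ => hc F)
    have hHj : ∀ j ∈ H, indic H j = 1 := fun j hj => by rw [indic_apply]; simp [hj]
    have hHk : ∀ k, k ∉ H → indic H k = 0 := fun k hk => by rw [indic_apply]; simp [hk]
    rcases lt_or_eq_of_le hu0nn with hu0pos | hu0zero
    · -- every j ∈ H lies in some member of Tlo; take the greatest
      have hju : ∀ j ∈ H, ∃ F ∈ Tlo, j ∈ F := by
        intro j hj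
        by_contra hcon
        push_neg at hcon
        have hempty : Tlo.filter (fun F => j ∈ F) = ∅ :=
          Finset.filter_eq_empty_iff.mpr (fun {F} hF => hcon F hF)
        have e1 := hx j
        have e2 := hx j₀
        rw [hHj j hj, hsplit j hj, hempty, Finset.sum_empty] at e1
        rw [hHj j₀ hj₀, hsplit j₀ hj₀, ← hu0] at e2
        linarith
      have hTlone : Tlo.Nonempty := by
        obtain ⟨F, hF, _⟩ := hju j₀ hj₀
        exact ⟨F, hF⟩
      have hchainlo : IsChain (· ⊆ ·) ((Tlo : Set (Set α))) :=
        hchainT.mono (by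
          intro F hF
          exact Finset.mem_coe.mpr ((Finset.mem_filter.mp (Finset.mem_coe.mp hF)).1))
      obtain ⟨Fm, hFm, hFmax⟩ := chain_exists_greatest hchainlo hTlone
      have hHFm : H ⊆ Fm := by
        intro j hj
        obtain ⟨F, hF, hjF⟩ := hju j hj
        exact hFmax F hF hjF
      have hFmH : Fm ⊆ H := (Finset.mem_filter.mp hFm).2
      exact hloH Fm hFm (hFmH.antisymm hHFm)
    · -- u0 = 0 : every k ∉ H misses some member of Thi; take the least
      have hwk : ∀ k, k ∉ H → (∑ F ∈ Thi.filter (fun F => k ∈ F), c F) = D - 1 := by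
        intro k hk
        have e1 := hx k
        have e2 := hx j₀
        rw [hHk k hk, hsplit2 k hk] at e1
        rw [hHj j₀ hj₀, hsplit j₀ hj₀, ← hu0] at e2
        linarith
      have hThine : Thi.Nonempty := by
        by_contra hcon
        rw [Finset.not_nonempty_iff_eq_empty] at hcon
        have h1 := hwk k₀ hk₀
        rw [hcon] at h1
        simp only [Finset.filter_empty, Finset.sum_empty] at h1
        rw [hD, hcon, Finset.sum_empty] at h1
        linarith
      have hchainhi : IsChain (· ⊆ ·) ((Thi : Set (Set α))) :=
        hchainT.mono (by
          intro F hF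
          exact Finset.mem_coe.mpr ((Finset.mem_filter.mp (Finset.mem_coe.mp hF)).1))
      obtain ⟨Fm, hFm, hFmin⟩ := chain_exists_least hchainhi hThine
      have hHFm : H ⊆ Fm := (Finset.mem_filter.mp hFm).2
      have hFmH : Fm ⊆ H := by
        intro k hkFm
        by_contra hk
        have hfull : Thi.filter (fun F => k ∈ F) = Thi := by
          apply Finset.filter_true_of_mem
          intro F hF
          exact (hFmin F hF) hkFm
        have h1 := hwk k hk
        rw [hfull] at h1
        linarith
      exact hhiH Fm hFm (hHFm.antisymm hFmH).symm
  exact hTsub hHT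

end Cones


section Iso

variable {α β : Type*} [Fintype α] [Fintype β]
variable {M₁ : Matroid α} {M₂ : Matroid β}
variable {φ : Amb α →ₗ[ℝ] Amb β} {ψ : Amb β →ₗ[ℝ] Amb α}

/-- The data of a mutually inverse pair of linear maps inducing an isomorphism of fine
Bergman fans of simple matroids. -/
structure GoodIso (M₁ : Matroid α) (M₂ : Matroid β)
    (φ : Amb α →ₗ[ℝ] Amb β) (ψ : Amb β →ₗ[ℝ] Amb α) : Prop where
  hE₁ : M₁.E = Set.univ
  hE₂ : M₂.E = Set.univ
  hs₁ : Simple M₁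
  hs₂ : Simple M₂
  hinv₁ : ∀ x, ψ (φ x) = x
  hinv₂ : ∀ y, φ (ψ y) = y
  hlatt : φ '' intLatt α = intLatt β
  hcones : ∀ σ ∈ fineFan M₁, φ '' σ ∈ fineFan M₂
  hcones' : ∀ τ ∈ fineFan M₂, ψ '' τ ∈ fineFan M₁

lemma GoodIso.symm (h : GoodIso M₁ M₂ φ ψ) : GoodIso M₂ M₁ ψ φ where
  hE₁ := h.hE₂
  hE₂ := h.hE₁
  hs₁ := h.hs₂
  hs₂ := h.hs₁
  hinv₁ := h.hinv₂
  hinv₂ := h.hinv₁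
  hlatt := by
    rw [← h.hlatt, Set.image_image]
    simp only [h.hinv₁, Set.image_id']
  hcones := h.hcones'
  hcones' := h.hcones

lemma ProperFlat.nonempty {M : Matroid α} {F : Set α} (hF : ProperFlat M F) : F.Nonempty :=
  hF.2.1

lemma ProperFlat.ne_univ {M : Matroid α} {F : Set α} (hF : ProperFlat M F)
    (hE : M.E = Set.univ) : F ≠ Set.univ := hE ▸ hF.2.2

lemma indic_mem_intLatt (S : Set α) : proj α (indic S) ∈ intLatt α := by
  refine ⟨indic S, fun i => ?_, rfl⟩
  rw [indic_apply]
  split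
  · exact ⟨1, by norm_num⟩
  · exact ⟨0, by norm_num⟩

lemma isChain_singleton (F : Set α) :
    IsChain (· ⊆ ·) ((({F} : Finset (Set α)) : Set (Set α))) := by
  intro a ha b hb hne
  simp only [Finset.coe_singleton, Set.mem_singleton_iff] at ha hb
  exact absurd (ha.trans hb.symm) hne

lemma isChain_pair {F₁ F₂ : Set α} (hsub : F₁ ⊆ F₂) :
    IsChain (· ⊆ ·) ((({F₁, F₂} : Finset (Set α)) : Set (Set α))) := by
  intro a ha b hb hne
  simp only [Finset.coe_insert, Finset.coe_singleton, Set.mem_insert_iff,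
    Set.mem_singleton_iff] at ha hb
  rcases ha with rfl | rfl <;> rcases hb with rfl | rfl
  · exact absurd rfl hne
  · exact Or.inl hsub
  · exact Or.inr hsub
  · exact absurd rfl hne

lemma flagCone_empty : flagCone (∅ : Finset (Set α)) = {0} := by
  ext x
  constructor
  · rintro ⟨c, _, rfl⟩
    simp
  · rintro rfl
    exact ⟨fun _ => 0, fun _ => le_rfl, by simp⟩

/-- Step A: the image of the ray of a proper flat is a positive-integer multiple of
the ray of a proper flat. -/
lemma GoodIso.stepA (h : GoodIso M₁ M₂ φ ψ) {F : Set α} (hF : ProperFlat M₁ F) :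
    ∃ H, ProperFlat M₂ H ∧ ∃ u : ℝ, 1 ≤ u ∧
      φ (proj α (indic F)) = u • proj β (indic H) := by
  classical
  have hFne := hF.nonempty
  have hFpr := hF.ne_univ h.hE₁
  have hvF : proj α (indic F) ≠ 0 := proj_indic_ne_zero hFne hFpr
  have hφvF : φ (proj α (indic F)) ≠ 0 := by
    intro hc
    apply hvF
    rw [← h.hinv₁ (proj α (indic F)), hc, map_zero]
  obtain ⟨𝒟, hchain𝒟, hflats𝒟, heq⟩ :=
    h.hcones _ (flagCone_mem_fineFan (isChain_singleton F) (by
      intro G hG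
      rw [Finset.mem_singleton] at hG
      exact hG ▸ hF))
  have himg : φ '' flagCone ({F} : Finset (Set α)) = flagCone 𝒟 := heq
  -- 𝒟 is nonempty
  obtain ⟨H, hH𝒟⟩ : 𝒟.Nonempty := by
    by_contra hc
    rw [Finset.not_nonempty_iff_eq_empty] at hc
    have : φ (proj α (indic F)) ∈ flagCone 𝒟 := by
      rw [← himg]
      exact Set.mem_image_of_mem _ (mem_flagCone_self (Finset.mem_singleton_self F))
    rw [hc, flagCone_empty] at this
    exact hφvF this
  have hHflat := hflats𝒟 H hH𝒟
  have hHne := hHflat.nonempty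
  have hHpr := hHflat.ne_univ h.hE₂
  -- v_H is a nonneg multiple of φ v_F
  have hvH : proj β (indic H) ∈ φ '' flagCone ({F} : Finset (Set α)) := by
    rw [himg]; exact mem_flagCone_self hH𝒟
  obtain ⟨z, hz, hφz⟩ := hvH
  rw [flagCone_singleton] at hz
  obtain ⟨t, ht, rfl⟩ := hz
  rw [map_smul] at hφz
  have htpos : 0 < t := by
    rcases lt_or_eq_of_le ht with h' | h'
    · exact h'
    · exfalso
      apply proj_indic_ne_zero hHne hHpr
      rw [← hφz, ← h', zero_smul]
  refine ⟨H, hHflat, t⁻¹, ?_, ?_⟩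
  swap
  · rw [← hφz, smul_smul, inv_mul_cancel₀ (ne_of_gt htpos), one_smul]
  -- integrality of t⁻¹
  have hmem : φ (proj α (indic F)) ∈ intLatt β := by
    rw [← h.hlatt]
    exact Set.mem_image_of_mem _ (indic_mem_intLatt F)
  obtain ⟨y, hy, hyeq⟩ := hmem
  have : proj β y = proj β (t⁻¹ • indic H) := by
    rw [map_smul, ← hφz, smul_smul, inv_mul_cancel₀ (ne_of_gt htpos), one_smul, hyeq]
  obtain ⟨s, hs⟩ := proj_eq_iff.mp this
  obtain ⟨j, hj⟩ := hHne
  obtain ⟨k, hk⟩ : ∃ k, k ∉ H := by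
    by_contra hc; push_neg at hc; exact hHpr (Set.eq_univ_of_forall hc)
  have e1 := hs j
  have e2 := hs k
  simp only [Pi.smul_apply, smul_eq_mul, indic_apply, hj, hk, if_true, if_false,
    mul_one, mul_zero] at e1 e2
  obtain ⟨n₁, hn₁⟩ := hy j
  obtain ⟨n₂, hn₂⟩ := hy k
  have htint : t⁻¹ = ((n₁ - n₂ : ℤ) : ℝ) := by
    push_cast
    rw [← hn₁, ← hn₂]
    linarith
  have hpos : (0:ℝ) < ((n₁ - n₂ : ℤ) : ℝ) := htint ▸ inv_pos.mpr htpos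
  have : (1:ℤ) ≤ n₁ - n₂ := by exact_mod_cast hpos
  rw [htint]
  exact_mod_cast this

/-- The image of the class of the indicator vector of a proper flat is the class of the
indicator vector of a proper flat. -/
lemma GoodIso.exists_flat (h : GoodIso M₁ M₂ φ ψ) {F : Set α} (hF : ProperFlat M₁ F) :
    ∃ H, ProperFlat M₂ H ∧ φ (proj α (indic F)) = proj β (indic H) := by
  obtain ⟨H, hH, u, hu, hphi⟩ := h.stepA hF
  obtain ⟨F', hF', u₂, hu₂, hpsi⟩ := h.symm.stepA hH
  have key : proj α (indic F) = proj α ((u*u₂) • indic F') := by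
    rw [map_smul]
    calc proj α (indic F) = ψ (φ (proj α (indic F))) := (h.hinv₁ _).symm
    _ = u • ψ (proj β (indic H)) := by rw [hphi, map_smul]
    _ = (u*u₂) • proj α (indic F') := by rw [hpsi, smul_smul]
  obtain ⟨s, hs⟩ := proj_eq_iff.mp key
  obtain ⟨j, hj⟩ := hF'.nonempty
  obtain ⟨k, hk⟩ : ∃ k, k ∉ F' := by
    by_contra hc; push_neg at hc
    exact hF'.ne_univ h.hE₁ (Set.eq_univ_of_forall hc)
  have e1 := hs j
  have e2 := hs k
  simp only [Pi.smul_apply, smul_eq_mul, indic_apply, hj, hk, if_true, if_false,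
    mul_one, mul_zero, sub_zero] at e1 e2
  have hale : (if j ∈ F then (1:ℝ) else 0) ≤ 1 := by split <;> norm_num
  have hble : (0:ℝ) ≤ (if k ∈ F then (1:ℝ) else 0) := by split <;> norm_num
  have hupos : (0:ℝ) ≤ u := le_trans zero_le_one hu
  have h1 : u * 1 ≤ u * u₂ := mul_le_mul_of_nonneg_left hu₂ hupos
  have huu : u * u₂ = 1 := le_antisymm (by linarith) (by nlinarith)
  have hu1 : u = 1 := le_antisymm (by linarith) hu
  refine ⟨H, hH, ?_⟩
  rw [hphi, hu1, one_smul]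

/-- Images of nested proper flats are comparable. -/
lemma GoodIso.comparable (h : GoodIso M₁ M₂ φ ψ) {F₁ F₂ : Set α} {H₁' H₂' : Set β}
    (hF₁ : ProperFlat M₁ F₁) (hF₂ : ProperFlat M₁ F₂) (hsub : F₁ ⊆ F₂)
    (hH₁ : ProperFlat M₂ H₁') (hH₂ : ProperFlat M₂ H₂')
    (e₁ : φ (proj α (indic F₁)) = proj β (indic H₁'))
    (e₂ : φ (proj α (indic F₂)) = proj β (indic H₂')) :
    H₁' ⊆ H₂' ∨ H₂' ⊆ H₁' := by
  classical
  obtain ⟨𝒟, hchain𝒟, hflats𝒟, heq⟩ :=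
    h.hcones _ (flagCone_mem_fineFan (isChain_pair hsub) (by
      intro G hG
      rcases Finset.mem_insert.mp hG with rfl | hG
      · exact hF₁
      · rw [Finset.mem_singleton] at hG
        exact hG ▸ hF₂))
  have m1 : H₁' ∈ 𝒟 := by
    apply mem_chain_of_mem_flagCone hchain𝒟 hH₁.nonempty (hH₁.ne_univ h.hE₂)
    rw [← heq, ← e₁]
    exact Set.mem_image_of_mem _ (mem_flagCone_self (Finset.mem_insert_self _ _))
  have m2 : H₂' ∈ 𝒟 := by
    apply mem_chain_of_mem_flagCone hchain𝒟 hH₂.nonempty (hH₂.ne_univ h.hE₂)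
    rw [← heq, ← e₂]
    exact Set.mem_image_of_mem _ (mem_flagCone_self (by
      exact Finset.mem_insert_of_mem (Finset.mem_singleton_self _)))
  rcases eq_or_ne H₁' H₂' with rfl | hne
  · exact Or.inl Set.Subset.rfl
  · exact hchain𝒟 (Finset.mem_coe.mpr m1) (Finset.mem_coe.mpr m2) hne

end Iso


section MatroidAux

variable {α β : Type*} [Fintype α] [Fintype β] {M : Matroid α}

lemma Simple.indep_singleton (hs : Simple M) (hE : M.E = Set.univ) (i : α) :
    M.Indep {i} := by
  have := hs i (by rw [hE]; trivial) i (by rw [hE]; trivial)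
  simpa using this

lemma Simple.closure_empty (hs : Simple M) (hE : M.E = Set.univ) :
    M.closure ∅ = ∅ := by
  ext e
  simp only [Set.mem_empty_iff_false, iff_false]
  intro he
  have hind : M.Indep {e} := hs.indep_singleton hE e
  have h2 := (Matroid.indep_iff_forall_notMem_closure_diff
    (by rw [hE]; exact Set.subset_univ _)).mp hind (Set.mem_singleton e)
  rw [Set.diff_self] at h2
  exact h2 he

lemma Simple.flat_empty (hs : Simple M) (hE : M.E = Set.univ) : M.IsFlat ∅ := by
  refine ⟨fun J X hJ hJX => ?_, Set.empty_subset _⟩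
  have hJe : J = ∅ := Set.subset_empty_iff.mp hJ.subset
  subst hJe
  have hX : X ⊆ M.closure ∅ := Matroid.empty_isBasis_iff.mp hJX
  rwa [hs.closure_empty hE] at hX

lemma Simple.closure_singleton (hs : Simple M) (hE : M.E = Set.univ) (i : α) :
    M.closure {i} = {i} := by
  apply Set.Subset.antisymm _ (M.subset_closure _ (by rw [hE]; exact Set.subset_univ _))
  intro e he
  by_contra hne
  rw [Set.mem_singleton_iff] at hne
  have hind : M.Indep (insert e {i}) := hs e (by rw [hE]; trivial) i (by rw [hE]; trivial)
  have := (Matroid.Indep.insert_indep_iff_of_notMem (hs.indep_singleton hE i)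
    (by simpa using hne)).mp hind
  exact this.2 he

lemma Simple.flat_singleton (hs : Simple M) (hE : M.E = Set.univ) (i : α) :
    M.IsFlat {i} := by
  refine ⟨fun J X hJ hJX => ?_, by rw [hE]; exact Set.subset_univ _⟩
  rcases Set.subset_singleton_iff_eq.mp hJ.subset with hJe | hJe
  · subst hJe
    have hX : X ⊆ M.closure ∅ := Matroid.empty_isBasis_iff.mp hJX
    rw [hs.closure_empty hE] at hX
    exact hX.trans (Set.empty_subset _)
  · subst hJe
    have hX : X ⊆ M.closure {i} := hJX.subset_closure
    rwa [hs.closure_singleton hE i] at hX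

lemma no_circuit_of_flats (hE : M.E = Set.univ)
    (hflats : ∀ y : α, M.IsFlat (Set.univ \ {y})) : ∀ C, ¬ Circuit M C := by
  rintro C ⟨hdep, hmin⟩
  have hCne : C.Nonempty := by
    rcases C.eq_empty_or_nonempty with rfl | hne
    · exact absurd M.empty_indep (Matroid.dep_iff.mp hdep).1
    · exact hne
  obtain ⟨k, hk⟩ := hCne
  have hCk : M.Indep (C \ {k}) := hmin _ (Set.sdiff_singleton_ssubset.mpr hk)
  have hdepC : ¬ M.Indep C := (Matroid.dep_iff.mp hdep).1
  have hiff := Matroid.Indep.insert_indep_iff_of_notMem hCk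
    (by simp : k ∉ C \ {k})
  rw [Set.insert_diff_singleton, Set.insert_eq_of_mem hk] at hiff
  have hkcl : k ∈ M.closure (C \ {k}) := by
    by_contra hkcl
    exact hdepC (hiff.mpr ⟨by rw [hE]; trivial, hkcl⟩)
  have hsub : M.closure (C \ {k}) ⊆ M.closure (Set.univ \ {k}) :=
    M.closure_subset_closure (Set.diff_subset_diff_left (Set.subset_univ C))
  rw [(hflats k).closure] at hsub
  exact (hsub hkcl).2 rfl

lemma td_of_no_circuit (hE : M.E = Set.univ) (hnc : ∀ C, ¬ Circuit M C) :
    TotallyDisconnected M := by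
  intro i _
  have hcomp : component M i ⊆ {i} := by
    intro j hj
    obtain ⟨-, hrel⟩ := hj
    rcases hrel with rfl | ⟨C, hC, -⟩
    · rfl
    · exact absurd hC (hnc C)
  rw [rkSet]
  apply csSup_le
  · exact ⟨0, ∅, Set.empty_subset _, M.empty_indep, by simp⟩
  rintro n ⟨I, hIsub, _, rfl⟩
  calc I.ncard ≤ ({i} : Set α).ncard :=
        Set.ncard_le_ncard (hIsub.trans hcomp) (Set.finite_singleton i)
  _ = 1 := Set.ncard_singleton i

lemma two_le_card_of_not_td (hE : M.E = Set.univ) (htd : ¬ TotallyDisconnected M) :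
    2 ≤ Fintype.card α := by
  rw [TotallyDisconnected] at htd
  push_neg at htd
  obtain ⟨i, _, hrk⟩ := htd
  rw [rkSet] at hrk
  have hbdd : BddAbove {n | ∃ I, I ⊆ component M i ∧ M.Indep I ∧ I.ncard = n} := by
    refine ⟨Fintype.card α, ?_⟩
    rintro n ⟨I, _, _, rfl⟩
    calc I.ncard ≤ (Set.univ : Set α).ncard :=
          Set.ncard_le_ncard (Set.subset_univ I) Set.finite_univ
    _ = Fintype.card α := by rw [Set.ncard_univ, Nat.card_eq_fintype_card]
  have hne : {n | ∃ I, I ⊆ component M i ∧ M.Indep I ∧ I.ncard = n}.Nonempty :=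
    ⟨0, ∅, Set.empty_subset _, M.empty_indep, by simp⟩
  obtain ⟨I, hIsub, hI, hcard⟩ := Nat.sSup_mem hne hbdd
  have h2 : 2 ≤ I.ncard := by omega
  calc 2 ≤ I.ncard := h2
  _ ≤ (Set.univ : Set α).ncard := Set.ncard_le_ncard (Set.subset_univ I) Set.finite_univ
  _ = Fintype.card α := by rw [Set.ncard_univ, Nat.card_eq_fintype_card]

lemma card_eq_of_amb_equiv (e : Amb α ≃ₗ[ℝ] Amb β)
    (h₁ : 1 ≤ Fintype.card α) (h₂ : 1 ≤ Fintype.card β) :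
    Fintype.card α = Fintype.card β := by
  have hα : Nonempty α := Fintype.card_pos_iff.mp h₁
  have hβ : Nonempty β := Fintype.card_pos_iff.mp h₂
  have hone₁ : (fun _ : α => (1:ℝ)) ≠ 0 := by
    intro hc
    have := congrFun hc (Classical.arbitrary α)
    norm_num at this
  have hone₂ : (fun _ : β => (1:ℝ)) ≠ 0 := by
    intro hc
    have := congrFun hc (Classical.arbitrary β)
    norm_num at this
  have d₁ : Module.finrank ℝ (Amb α) + 1 = Fintype.card α := by
    have := Submodule.finrank_quotient_add_finrank (lineSub α)
    rw [lineSub] at this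
    rwa [finrank_span_singleton hone₁, Module.finrank_pi] at this
  have d₂ : Module.finrank ℝ (Amb β) + 1 = Fintype.card β := by
    have := Submodule.finrank_quotient_add_finrank (lineSub β)
    rw [lineSub] at this
    rwa [finrank_span_singleton hone₂, Module.finrank_pi] at this
  have := e.finrank_eq
  omega

end MatroidAux


section Transfer

variable {α β : Type*} [Fintype α] [Fintype β] {M₁ : Matroid α} {M₂ : Matroid β}

lemma proj_indic_image (f : α ≃ β) (F : Set α) :
    proj β (indic (f '' F)) = ∑ i ∈ F.toFinset, proj β (indic ({f i} : Set β)) := by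
  classical
  rw [proj_indic_eq_sum, Set.toFinset_image,
    Finset.sum_image (fun a _ b _ hab => f.injective hab)]

lemma mem_closure_transfer (hE₁ : M₁.E = Set.univ) (hE₂ : M₂.E = Set.univ) (f : α ≃ β)
    (hflat' : ∀ H, M₂.IsFlat H → M₁.IsFlat (f.symm '' H))
    {X : Set α} {e : α} (he : e ∈ M₁.closure X) : f e ∈ M₂.closure (f '' X) := by
  rw [Matroid.mem_closure_iff_forall_mem_isFlat _ (by rw [hE₂]; exact Set.subset_univ _)]
  intro H hH hXH
  have h1 : M₁.IsFlat (f.symm '' H) := hflat' H hH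
  have h2 : X ⊆ f.symm '' H := by
    intro x hx
    exact ⟨f x, hXH (Set.mem_image_of_mem f hx), f.symm_apply_apply x⟩
  have h3 := (Matroid.mem_closure_iff_forall_mem_isFlat X
    (by rw [hE₁]; exact Set.subset_univ _)).mp he _ h1 h2
  obtain ⟨y, hy, hy2⟩ := h3
  rwa [show f e = y by rw [← hy2, f.apply_symm_apply]]

lemma indep_image_of_flat_transfer (hE₁ : M₁.E = Set.univ) (hE₂ : M₂.E = Set.univ)
    (f : α ≃ β) (hflat : ∀ F, M₁.IsFlat F → M₂.IsFlat (f '' F))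
    (hflat' : ∀ H, M₂.IsFlat H → M₁.IsFlat (f.symm '' H))
    {I : Set α} (hI : M₁.Indep I) : M₂.Indep (f '' I) := by
  rw [Matroid.indep_iff_forall_notMem_closure_diff (by rw [hE₂]; exact Set.subset_univ _)]
  rintro e he hecl
  obtain ⟨i, hi, rfl⟩ := he
  have himg : f '' I \ {f i} = f '' (I \ {i}) := by
    rw [Set.image_diff f.injective, Set.image_singleton]
  rw [himg] at hecl
  have h2 := mem_closure_transfer hE₂ hE₁ f.symm
    (fun F hF => by simpa using hflat F hF) hecl
  rw [f.symm_apply_apply, Equiv.symm_image_image] at h2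
  exact (Matroid.indep_iff_forall_notMem_closure_diff
    (by rw [hE₁]; exact Set.subset_univ _)).mp hI hi h2

end Transfer

/-- An isomorphism of fine fan structures of Bergman fans of simple,
not totally disconnected matroids is induced by a matroid isomorphism. -/
theorem fine_fan_iso_induced_by_matroid_iso
    {α β : Type*} [Fintype α] [Fintype β] (M₁ : Matroid α) (M₂ : Matroid β)
    (hE₁ : M₁.E = Set.univ) (hE₂ : M₂.E = Set.univ)
    (hs₁ : Simple M₁) (hs₂ : Simple M₂)
    (htd₁ : ¬ TotallyDisconnected M₁) (htd₂ : ¬ TotallyDisconnected M₂)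
    (φ : Amb α →ₗ[ℝ] Amb β)
    (hφ : IsFanIso (intLatt α) (intLatt β) φ (fineFan M₁) (fineFan M₂)) :
    ∃ f : α ≃ β, IsMatroidIso M₁ M₂ f ∧
      ∀ i : α, φ (proj α (indic {i})) = proj β (indic {f i}) := by
  classical
  obtain ⟨⟨hbij, hlatt⟩, hcones, hcones'⟩ := hφ
  set eqv : Amb α ≃ₗ[ℝ] Amb β := LinearEquiv.ofBijective φ hbij with heqv
  set ψ : Amb β →ₗ[ℝ] Amb α := (eqv.symm : Amb β →ₗ[ℝ] Amb α) with hψdef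
  have hinv₁ : ∀ x, ψ (φ x) = x := fun x => eqv.symm_apply_apply x
  have hinv₂ : ∀ y, φ (ψ y) = y := fun y => eqv.apply_symm_apply y
  have hpsicones : ∀ τ ∈ fineFan M₂, ψ '' τ ∈ fineFan M₁ := by
    intro τ hτ
    have himg : ψ '' τ = φ ⁻¹' τ := by
      ext x
      constructor
      · rintro ⟨y, hy, rfl⟩
        simpa [Set.mem_preimage, hinv₂ y] using hy
      · intro hx
        exact ⟨φ x, hx, hinv₁ x⟩
    rw [himg]
    exact hcones' τ hτ
  have h : GoodIso M₁ M₂ φ ψ :=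
    ⟨hE₁, hE₂, hs₁, hs₂, hinv₁, hinv₂, hlatt, hcones, hpsicones⟩
  have hc₁ := two_le_card_of_not_td hE₁ htd₁
  have hc₂ := two_le_card_of_not_td hE₂ htd₂
  have hcard : Fintype.card α = Fintype.card β :=
    card_eq_of_amb_equiv eqv (by omega) (by omega)
  -- singletons are proper flats
  have hsne : ∀ i : α, ({i} : Set α) ≠ Set.univ := by
    intro i hc
    obtain ⟨j, hj⟩ := Fintype.exists_ne_of_one_lt_card (by omega : 1 < Fintype.card α) i
    exact hj (by simpa using (hc ▸ Set.mem_univ j : j ∈ ({i} : Set α)))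
  have hsne' : ∀ j : β, ({j} : Set β) ≠ Set.univ := by
    intro j hc
    obtain ⟨k, hk⟩ := Fintype.exists_ne_of_one_lt_card (by omega : 1 < Fintype.card β) j
    exact hk (by simpa using (hc ▸ Set.mem_univ k : k ∈ ({j} : Set β)))
  have hatom₁ : ∀ i : α, ProperFlat M₁ {i} :=
    fun i => ⟨hs₁.flat_singleton hE₁ i, Set.singleton_nonempty i, by rw [hE₁]; exact hsne i⟩
  have hatom₂ : ∀ j : β, ProperFlat M₂ {j} :=
    fun j => ⟨hs₂.flat_singleton hE₂ j, Set.singleton_nonempty j, by rw [hE₂]; exact hsne' j⟩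
  choose A hAflat hAeq using fun i : α => h.exists_flat (hatom₁ i)
  choose B hBflat hBeq using fun j : β => h.symm.exists_flat (hatom₂ j)
  have hsinj : ∀ i i' : α, proj α (indic {i}) = proj α (indic {i'}) → i = i' := by
    intro i i' hp
    exact Set.singleton_eq_singleton_iff.mp
      (indic_proj_inj (Set.singleton_nonempty i) (hsne i)
        (Set.singleton_nonempty i') (hsne i') hp)
  have hBeq' : ∀ j : β, φ (proj α (indic (B j))) = proj β (indic {j}) := by
    intro j; rw [← hBeq j, hinv₂]
  have hAeq' : ∀ i : α, ψ (proj β (indic (A i))) = proj α (indic {i}) := by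
    intro i; rw [← hAeq i, hinv₁]
  -- transpose relation
  have hT1 : ∀ (i : α) (j : β), j ∈ A i ↔ i ∈ B j := by
    intro i j
    constructor
    · intro hj
      have hcomp := h.symm.comparable (hatom₂ j) (hAflat i)
        (Set.singleton_subset_iff.mpr hj) (hBflat j) (hatom₁ i) (hBeq j) (hAeq' i)
      rcases hcomp with hle | hle
      · rcases Set.subset_singleton_iff_eq.mp hle with hc | hc
        · exact absurd hc (Set.nonempty_iff_ne_empty.mp (hBflat j).nonempty)
        · rw [hc]; rfl
      · exact hle rfl
    · intro hi
      have hcomp := h.comparable (hatom₁ i) (hBflat j)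
        (Set.singleton_subset_iff.mpr hi) (hAflat i) (hatom₂ j) (hAeq i) (hBeq' j)
      rcases hcomp with hle | hle
      · rcases Set.subset_singleton_iff_eq.mp hle with hc | hc
        · exact absurd hc (Set.nonempty_iff_ne_empty.mp (hAflat i).nonempty)
        · rw [hc]; rfl
      · exact hle rfl
  -- counting relations for A
  have hcount : ∀ (i k : α),
      (∑ j ∈ (A i).toFinset, indic (B j) k) = ((A i ∩ A k).ncard : ℝ) := by
    intro i k
    have hterm : ∀ j ∈ (A i).toFinset, indic (B j) k = if j ∈ A k then (1:ℝ) else 0 := by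
      intro j _
      rw [indic_apply]
      simp only [show (k ∈ B j) = (j ∈ A k) from propext (hT1 k j).symm]
    rw [Finset.sum_congr rfl hterm, Finset.sum_boole]
    congr 1
    rw [show (A i).toFinset.filter (fun j => j ∈ A k) = (A i ∩ A k).toFinset from by
      ext j; simp [Set.mem_toFinset], ← Set.ncard_eq_toFinset_card']
  have hrel : ∀ i k : α, k ≠ i → (A i ∩ A k).ncard + 1 = (A i).ncard := by
    intro i k hki
    have e1 : proj α (indic {i}) = proj α (fun x => ∑ j ∈ (A i).toFinset, indic (B j) x) := by
      have hfun : (fun x => ∑ j ∈ (A i).toFinset, indic (B j) x)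
          = ∑ j ∈ (A i).toFinset, indic (B j) := by
        funext x; rw [Finset.sum_apply]
      rw [hfun, map_sum]
      calc proj α (indic {i}) = ψ (proj β (indic (A i))) := (hAeq' i).symm
      _ = ψ (∑ j ∈ (A i).toFinset, proj β (indic {j})) := by rw [← proj_indic_eq_sum]
      _ = ∑ j ∈ (A i).toFinset, ψ (proj β (indic {j})) := map_sum ψ _ _
      _ = ∑ j ∈ (A i).toFinset, proj α (indic (B j)) :=
          Finset.sum_congr rfl (fun j _ => hBeq j)
    obtain ⟨s, hs⟩ := proj_eq_iff.mp e1
    have h1 : indic {i} i - ∑ j ∈ (A i).toFinset, indic (B j) i = s := hs i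
    have h2 : indic {i} k - ∑ j ∈ (A i).toFinset, indic (B j) k = s := hs k
    rw [hcount i i, Set.inter_self, indic_apply] at h1
    rw [hcount i k, indic_apply] at h2
    rw [if_pos (Set.mem_singleton i)] at h1
    rw [if_neg (by simpa using hki)] at h2
    have hreal : ((A i ∩ A k).ncard : ℝ) + 1 = ((A i).ncard : ℝ) := by linarith
    exact_mod_cast hreal
  -- counting relations for B (mirror)
  have hcountB : ∀ (j k : β),
      (∑ i ∈ (B j).toFinset, indic (A i) k) = ((B j ∩ B k).ncard : ℝ) := by
    intro j k
    have hterm : ∀ i ∈ (B j).toFinset, indic (A i) k = if i ∈ B k then (1:ℝ) else 0 := by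
      intro i _
      rw [indic_apply]
      simp only [show (k ∈ A i) = (i ∈ B k) from propext (hT1 i k)]
    rw [Finset.sum_congr rfl hterm, Finset.sum_boole]
    congr 1
    rw [show (B j).toFinset.filter (fun i => i ∈ B k) = (B j ∩ B k).toFinset from by
      ext i; simp [Set.mem_toFinset], ← Set.ncard_eq_toFinset_card']
  have hrelB : ∀ j k : β, k ≠ j → (B j ∩ B k).ncard + 1 = (B j).ncard := by
    intro j k hkj
    have e1 : proj β (indic {j}) = proj β (fun x => ∑ i ∈ (B j).toFinset, indic (A i) x) := by
      have hfun : (fun x => ∑ i ∈ (B j).toFinset, indic (A i) x)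
          = ∑ i ∈ (B j).toFinset, indic (A i) := by
        funext x; rw [Finset.sum_apply]
      rw [hfun, map_sum]
      calc proj β (indic {j}) = φ (proj α (indic (B j))) := (hBeq' j).symm
      _ = φ (∑ i ∈ (B j).toFinset, proj α (indic {i})) := by rw [← proj_indic_eq_sum]
      _ = ∑ i ∈ (B j).toFinset, φ (proj α (indic {i})) := map_sum φ _ _
      _ = ∑ i ∈ (B j).toFinset, proj β (indic (A i)) :=
          Finset.sum_congr rfl (fun i _ => hAeq i)
    obtain ⟨s, hs⟩ := proj_eq_iff.mp e1
    have h1 : indic {j} j - ∑ i ∈ (B j).toFinset, indic (A i) j = s := hs j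
    have h2 : indic {j} k - ∑ i ∈ (B j).toFinset, indic (A i) k = s := hs k
    rw [hcountB j j, Set.inter_self, indic_apply] at h1
    rw [hcountB j k, indic_apply] at h2
    rw [if_pos (Set.mem_singleton j)] at h1
    rw [if_neg (by simpa using hkj)] at h2
    have hreal : ((B j ∩ B k).ncard : ℝ) + 1 = ((B j).ncard : ℝ) := by linarith
    exact_mod_cast hreal
  -- constant cardinalities
  obtain ⟨i₀⟩ : Nonempty α := Fintype.card_pos_iff.mp (by omega)
  obtain ⟨j₀⟩ : Nonempty β := Fintype.card_pos_iff.mp (by omega)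
  have hApos : ∀ i : α, 1 ≤ (A i).ncard := fun i =>
    (Set.ncard_pos (Set.toFinite _)).mpr (hAflat i).nonempty
  have hBpos : ∀ j : β, 1 ≤ (B j).ncard := fun j =>
    (Set.ncard_pos (Set.toFinite _)).mpr (hBflat j).nonempty
  have hAsame : ∀ i k : α, (A i).ncard = (A k).ncard := by
    intro i k
    rcases eq_or_ne k i with rfl | hne
    · rfl
    · have h1 := hrel i k hne
      have h2 := hrel k i hne.symm
      rw [Set.inter_comm] at h2
      omega
  have hBsame : ∀ j k : β, (B j).ncard = (B k).ncard := by
    intro j k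
    rcases eq_or_ne k j with rfl | hne
    · rfl
    · have h1 := hrelB j k hne
      have h2 := hrelB k j hne.symm
      rw [Set.inter_comm] at h2
      omega
  set ρ : ℕ := (A i₀).ncard - 1 with hρdef
  set ρ' : ℕ := (B j₀).ncard - 1 with hρ'def
  have hAn : ∀ i : α, (A i).ncard = ρ + 1 := by
    intro i
    have h1 := hAsame i i₀
    have h2 := hApos i₀
    omega
  have hBn : ∀ j : β, (B j).ncard = ρ' + 1 := by
    intro j
    have h1 := hBsame j j₀
    have h2 := hBpos j₀
    omega
  -- degree counts
  have hdeg : ∀ y : β, (Finset.univ.filter (fun i : α => y ∈ A i)).card = ρ' + 1 := by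
    intro y
    rw [← hBn y, Set.ncard_eq_toFinset_card']
    congr 1
    ext i
    simp [Set.mem_toFinset, hT1]
  have hdegB : ∀ x : α, (Finset.univ.filter (fun j : β => x ∈ B j)).card = ρ + 1 := by
    intro x
    rw [← hAn x, Set.ncard_eq_toFinset_card']
    congr 1
    ext j
    simp only [Finset.mem_filter, Finset.mem_univ, true_and, Set.mem_toFinset]
    exact (hT1 x j).symm
  -- double counting
  have hdc : (Fintype.card α - 1) * ρ = (ρ + 1) * ρ' := by
    have hL : ∑ i ∈ Finset.univ.erase i₀, (A i ∩ A i₀).ncard = (Fintype.card α - 1) * ρ := by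
      have hterm : ∀ i ∈ Finset.univ.erase i₀, (A i ∩ A i₀).ncard = ρ := by
        intro i hi
        have hne : i₀ ≠ i := fun hc => (Finset.mem_erase.mp hi).1 hc.symm
        have h1 := hrel i i₀ hne
        have h2 := hAn i
        omega
      rw [Finset.sum_congr rfl hterm, Finset.sum_const, smul_eq_mul,
        Finset.card_erase_of_mem (Finset.mem_univ i₀), Finset.card_univ]
    have hR : ∑ i ∈ Finset.univ.erase i₀, (A i ∩ A i₀).ncard = (ρ + 1) * ρ' := by
      have hterm : ∀ i ∈ Finset.univ.erase i₀, (A i ∩ A i₀).ncard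
          = ∑ y ∈ (A i₀).toFinset, if y ∈ A i then 1 else 0 := by
        intro i _
        rw [Set.inter_comm, Set.ncard_eq_toFinset_card',
          show (A i₀ ∩ A i).toFinset = (A i₀).toFinset.filter (fun y => y ∈ A i) from by
            ext y; simp [Set.mem_toFinset]]
        exact Finset.card_filter _ _
      rw [Finset.sum_congr rfl hterm, Finset.sum_comm]
      have hinner : ∀ y ∈ (A i₀).toFinset,
          (∑ i ∈ Finset.univ.erase i₀, if y ∈ A i then 1 else 0) = ρ' := by
        intro y hy
        rw [← Finset.card_filter]
        have hcomm : (Finset.univ.erase i₀).filter (fun i => y ∈ A i)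
            = (Finset.univ.filter (fun i => y ∈ A i)).erase i₀ := by
          ext i
          simp only [Finset.mem_erase, Finset.mem_filter, Finset.mem_univ, true_and]
          tauto
        have hmem : i₀ ∈ Finset.univ.filter (fun i => y ∈ A i) :=
          Finset.mem_filter.mpr ⟨Finset.mem_univ i₀, Set.mem_toFinset.mp hy⟩
        rw [hcomm, Finset.card_erase_of_mem hmem, hdeg y]
        omega
      rw [Finset.sum_congr rfl hinner, Finset.sum_const, smul_eq_mul]
      congr 1
      rw [← Set.ncard_eq_toFinset_card', hAn i₀]
    exact hL.symm.trans hR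
  have hdcB : (Fintype.card β - 1) * ρ' = (ρ' + 1) * ρ := by
    have hL : ∑ j ∈ Finset.univ.erase j₀, (B j ∩ B j₀).ncard = (Fintype.card β - 1) * ρ' := by
      have hterm : ∀ j ∈ Finset.univ.erase j₀, (B j ∩ B j₀).ncard = ρ' := by
        intro j hj
        have hne : j₀ ≠ j := fun hc => (Finset.mem_erase.mp hj).1 hc.symm
        have h1 := hrelB j j₀ hne
        have h2 := hBn j
        omega
      rw [Finset.sum_congr rfl hterm, Finset.sum_const, smul_eq_mul,
        Finset.card_erase_of_mem (Finset.mem_univ j₀), Finset.card_univ]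
    have hR : ∑ j ∈ Finset.univ.erase j₀, (B j ∩ B j₀).ncard = (ρ' + 1) * ρ := by
      have hterm : ∀ j ∈ Finset.univ.erase j₀, (B j ∩ B j₀).ncard
          = ∑ x ∈ (B j₀).toFinset, if x ∈ B j then 1 else 0 := by
        intro j _
        rw [Set.inter_comm, Set.ncard_eq_toFinset_card',
          show (B j₀ ∩ B j).toFinset = (B j₀).toFinset.filter (fun x => x ∈ B j) from by
            ext x; simp [Set.mem_toFinset]]
        exact Finset.card_filter _ _
      rw [Finset.sum_congr rfl hterm, Finset.sum_comm]
      have hinner : ∀ x ∈ (B j₀).toFinset,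
          (∑ j ∈ Finset.univ.erase j₀, if x ∈ B j then 1 else 0) = ρ := by
        intro x hx
        rw [← Finset.card_filter]
        have hcomm : (Finset.univ.erase j₀).filter (fun j => x ∈ B j)
            = (Finset.univ.filter (fun j => x ∈ B j)).erase j₀ := by
          ext j
          simp only [Finset.mem_erase, Finset.mem_filter, Finset.mem_univ, true_and]
          tauto
        have hmem : j₀ ∈ Finset.univ.filter (fun j => x ∈ B j) :=
          Finset.mem_filter.mpr ⟨Finset.mem_univ j₀, Set.mem_toFinset.mp hx⟩
        rw [hcomm, Finset.card_erase_of_mem hmem, hdegB x]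
        omega
      rw [Finset.sum_congr rfl hinner, Finset.sum_const, smul_eq_mul]
      congr 1
      rw [← Set.ncard_eq_toFinset_card', hBn j₀]
    exact hL.symm.trans hR
  -- ρ = ρ'
  have hρeq : ρ = ρ' := by
    obtain ⟨k, hk⟩ : ∃ k, Fintype.card α = k + 1 := ⟨Fintype.card α - 1, by omega⟩
    have e1 : k * ρ = ρ * ρ' + ρ' := by
      have h1 := hdc
      rw [hk, Nat.add_sub_cancel] at h1
      rw [h1]; ring
    have e2 : k * ρ' = ρ * ρ' + ρ := by
      have h1 := hdcB
      rw [← hcard, hk, Nat.add_sub_cancel] at h1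
      rw [h1]; ring
    have e3 : (k+1) * ρ = (k+1) * ρ' := by
      calc (k+1)*ρ = k*ρ + ρ := by ring
      _ = k*ρ' + ρ' := by rw [e1, e2]; ring
      _ = (k+1)*ρ' := by ring
    exact Nat.eq_of_mul_eq_mul_left (by omega) e3
  rcases Nat.eq_zero_or_pos ρ with hρ0 | hρpos
  · -- main case: all A i, B j are singletons
    have hA1 : ∀ i : α, (A i).ncard = 1 := fun i => by rw [hAn i, hρ0]
    have hB1 : ∀ j : β, (B j).ncard = 1 := fun j => by rw [hBn j, ← hρeq, hρ0]
    choose fv hfv using fun i : α => Set.ncard_eq_one.mp (hA1 i)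
    choose gv hgv using fun j : β => Set.ncard_eq_one.mp (hB1 j)
    have hgf : ∀ i : α, gv (fv i) = i := by
      intro i
      have h1 : fv i ∈ A i := by rw [hfv i]; rfl
      have h2 : i ∈ B (fv i) := (hT1 i (fv i)).mp h1
      rw [hgv (fv i)] at h2
      exact (Set.mem_singleton_iff.mp h2).symm
    have hfg : ∀ j : β, fv (gv j) = j := by
      intro j
      have h1 : gv j ∈ B j := by rw [hgv j]; rfl
      have h2 : j ∈ A (gv j) := (hT1 (gv j) j).mpr h1
      rw [hfv (gv j)] at h2
      exact (Set.mem_singleton_iff.mp h2).symm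
    set f : α ≃ β := ⟨fv, gv, hgf, hfg⟩ with hfdef
    have hAi : ∀ i : α, A i = {f i} := fun i => hfv i
    have hBj : ∀ j : β, B j = {f.symm j} := fun j => hgv j
    -- images of indicators of sets
    have himgproj : ∀ F : Set α, φ (proj α (indic F)) = proj β (indic (f '' F)) := by
      intro F
      rw [proj_indic_eq_sum F, map_sum, proj_indic_image f F]
      exact Finset.sum_congr rfl (fun i _ => by rw [hAeq i, hAi i])
    have himgproj' : ∀ H : Set β, ψ (proj β (indic H)) = proj α (indic (f.symm '' H)) := by
      intro H
      rw [proj_indic_eq_sum H, map_sum, proj_indic_image f.symm H]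
      exact Finset.sum_congr rfl (fun j _ => by rw [hBeq j, hBj j])
    -- flats correspond
    have himgproper : ∀ F : Set α, F ≠ Set.univ → f '' F ≠ Set.univ := by
      intro F hF hc
      apply hF
      rw [← Equiv.symm_image_image f F, hc, Set.image_univ, Equiv.range_eq_univ]
    have himgproper' : ∀ H : Set β, H ≠ Set.univ → f.symm '' H ≠ Set.univ := by
      intro H hH hc
      apply hH
      rw [← Equiv.symm_image_image f.symm H, hc, Set.image_univ, Equiv.range_eq_univ]
    have hflat : ∀ F : Set α, M₁.IsFlat F → M₂.IsFlat (f '' F) := by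
      intro F hF
      rcases eq_or_ne F Set.univ with rfl | hFne
      · rw [Set.image_univ, Equiv.range_eq_univ, ← hE₂]
        exact M₂.ground_isFlat
      rcases F.eq_empty_or_nonempty with rfl | hFnon
      · rw [Set.image_empty]
        exact hs₂.flat_empty hE₂
      obtain ⟨H, hH, heq2⟩ := h.exists_flat ⟨hF, hFnon, by rw [hE₁]; exact hFne⟩
      have hpr : proj β (indic (f '' F)) = proj β (indic H) := by
        rw [← himgproj, heq2]
      have hHeq := indic_proj_inj (hFnon.image f) (himgproper F hFne)
        hH.nonempty (hH.ne_univ hE₂) hpr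
      rw [hHeq]
      exact hH.1
    have hflat' : ∀ H : Set β, M₂.IsFlat H → M₁.IsFlat (f.symm '' H) := by
      intro H hH
      rcases eq_or_ne H Set.univ with rfl | hHne
      · rw [Set.image_univ, Equiv.range_eq_univ, ← hE₁]
        exact M₁.ground_isFlat
      rcases H.eq_empty_or_nonempty with rfl | hHnon
      · rw [Set.image_empty]
        exact hs₁.flat_empty hE₁
      obtain ⟨F, hF, heq2⟩ := h.symm.exists_flat ⟨hH, hHnon, by rw [hE₂]; exact hHne⟩
      have hpr : proj α (indic (f.symm '' H)) = proj α (indic F) := by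
        rw [← himgproj', heq2]
      have hFeq := indic_proj_inj (hHnon.image f.symm) (himgproper' H hHne)
        hF.nonempty (hF.ne_univ hE₁) hpr
      rw [hFeq]
      exact hF.1
    refine ⟨f, ⟨?_, ?_⟩, ?_⟩
    · rw [hE₁, hE₂, Set.image_univ, Equiv.range_eq_univ]
    · intro I _
      constructor
      · exact fun hI => indep_image_of_flat_transfer hE₁ hE₂ f hflat hflat' hI
      · intro hI
        have h2 := indep_image_of_flat_transfer hE₂ hE₁ f.symm hflat'
          (fun F hF => by simpa using hflat F hF) hI
        rwa [Equiv.symm_image_image] at h2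
    · intro i
      rw [hAeq i, hAi i]
  · -- impossible case: the A i are complements of points, contradicting non-total
    -- disconnectedness of M₂
    exfalso
    have hk1 : Fintype.card α - 1 = ρ + 1 := by
      have h1 := hdc
      rw [← hρeq] at h1
      exact Nat.eq_of_mul_eq_mul_right hρpos h1
    have hcompl : ∀ i : α, ∃ z : β, A i = Set.univ \ {z} := by
      intro i
      have hsub : A i ⊆ Set.univ := Set.subset_univ _
      have hdiff : ((Set.univ : Set β) \ A i).ncard = 1 := by
        rw [Set.ncard_diff hsub (Set.toFinite _), Set.ncard_univ,
          Nat.card_eq_fintype_card, hAn i]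
        omega
      obtain ⟨z, hz⟩ := Set.ncard_eq_one.mp hdiff
      exact ⟨z, by rw [← hz]; exact (Set.diff_diff_cancel_left hsub).symm⟩
    choose z hz using hcompl
    have hAinj : Function.Injective A := by
      intro i i' he
      apply hsinj
      have hphi : φ (proj α (indic {i})) = φ (proj α (indic {i'})) := by
        rw [hAeq i, hAeq i', he]
      have h2 := congrArg ψ hphi
      rwa [hinv₁, hinv₁] at h2
    have hzinj : Function.Injective z := by
      intro i i' he
      apply hAinj
      rw [hz i, hz i', he]
    have hzsurj : Function.Surjective z :=
      ((Fintype.bijective_iff_injective_and_card z).mpr ⟨hzinj, hcard⟩).2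
    have hflats : ∀ w : β, M₂.IsFlat (Set.univ \ {w}) := by
      intro w
      obtain ⟨i, rfl⟩ := hzsurj w
      rw [← hz i]
      exact (hAflat i).1
    exact htd₂ (td_of_no_circuit hE₂ (no_circuit_of_flats hE₂ hflats))

end BergmanFans
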